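/- Let A₁, A₂, B₁, B₂ be points of ℤ², and for points P,Q let P(P→Q) denote the number of lattice paths (right/down steps) from P to Q. Assume that every lattice path from A₁ to B₂ shares at least one point with every lattice path from A₂ to B₁. Then the number of pairs (π₁, π₂) where π₁ is a path from A₁ to B₁, π₂ is a path from A₂ to B₂, and π₁ and π₂ have no common point, equals P(A₁→B₁)·P(A₂→B₂) − P(A₁→B₂)·P(A₂→B₁). -/

import Mathlib

/-- One point of ℤ² is obtained from another by a right step (+1,0)
or a down step (0,−1). -/
def LatticeStep (p q : ℤ × ℤ) : Prop :=
  q = (p.1 + 1, p.2) ∨ q = (p.1, p.2 - 1)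

/-- `l` is a lattice path from `A` to `B`: a nonempty finite sequence of points
of ℤ² starting at `A`, ending at `B`, each point obtained from the previous one
by a right step or a down step. -/
def IsLatticePath (A B : ℤ × ℤ) (l : List (ℤ × ℤ)) : Prop :=
  l ≠ [] ∧ l.head? = some A ∧ l.getLast? = some B ∧ l.Chain' LatticeStep

/-- The number of lattice paths from `A` to `B`. -/
noncomputable def pathCount (A B : ℤ × ℤ) : ℕ :=
  Set.ncard {l : List (ℤ × ℤ) | IsLatticePath A B l}

namespace LGVAux

/-- Auxiliary strict order relation preserved by lattice steps. -/
def Rel (p q : ℤ × ℤ) : Prop :=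
  p.1 ≤ q.1 ∧ q.2 ≤ p.2 ∧ p.1 - p.2 < q.1 - q.2

instance : IsTrans (ℤ × ℤ) Rel :=
  ⟨fun _ _ _ h1 h2 => ⟨h1.1.trans h2.1, h2.2.1.trans h1.2.1, h1.2.2.trans h2.2.2⟩⟩

lemma step_rel {p q : ℤ × ℤ} (h : LatticeStep p q) : Rel p q := by
  rcases h with rfl | rfl
  · exact ⟨by change p.1 ≤ p.1 + 1; omega, le_refl _,
      by change p.1 - p.2 < p.1 + 1 - p.2; omega⟩
  · exact ⟨le_refl _, by change p.2 - 1 ≤ p.2; omega,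
      by change p.1 - p.2 < p.1 - (p.2 - 1); omega⟩

lemma lp_pairwise {A B : ℤ × ℤ} {l : List (ℤ × ℤ)} (h : IsLatticePath A B l) :
    l.Pairwise Rel :=
  List.isChain_iff_pairwise.mp (h.2.2.2.imp fun _ _ hpq => step_rel hpq)

lemma lp_nodup {A B : ℤ × ℤ} {l : List (ℤ × ℤ)} (h : IsLatticePath A B l) : l.Nodup :=
  (lp_pairwise h).imp fun hr => by
    rintro rfl; exact absurd hr.2.2 (lt_irrefl _)

lemma lp_cons {A B : ℤ × ℤ} {l : List (ℤ × ℤ)} (h : IsLatticePath A B l) :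
    ∃ t, l = A :: t := by
  obtain ⟨hne, hh, -, -⟩ := h
  cases l with
  | nil => exact absurd rfl hne
  | cons x t =>
    simp only [List.head?_cons, Option.some_inj] at hh
    exact ⟨t, by rw [hh]⟩

lemma lp_concat {A B : ℤ × ℤ} {l : List (ℤ × ℤ)} (h : IsLatticePath A B l) :
    ∃ s, l = s ++ [B] := by
  obtain ⟨hne, -, hl, -⟩ := h
  refine ⟨l.dropLast, ?_⟩
  have h1 : l.getLast hne = B := by
    rw [List.getLast?_eq_getLast_of_ne_nil hne] at hl
    exact Option.some_injective _ hl
  rw [← h1]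
  exact (List.dropLast_append_getLast hne).symm

lemma lp_mem_bounds {A B : ℤ × ℤ} {l : List (ℤ × ℤ)} (h : IsLatticePath A B l)
    {x : ℤ × ℤ} (hx : x ∈ l) :
    A.1 ≤ x.1 ∧ x.2 ≤ A.2 ∧ x.1 ≤ B.1 ∧ B.2 ≤ x.2 ∧
      A.1 - A.2 ≤ x.1 - x.2 ∧ x.1 - x.2 ≤ B.1 - B.2 := by
  have hpw := lp_pairwise h
  obtain ⟨t, rfl⟩ := lp_cons h
  obtain ⟨s, hs⟩ := lp_concat h
  have h1 : x = A ∨ Rel A x := by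
    rcases List.mem_cons.mp hx with rfl | hx
    · exact Or.inl rfl
    · exact Or.inr ((List.pairwise_cons.mp hpw).1 x hx)
  have h2 : x = B ∨ Rel x B := by
    rw [hs] at hpw hx
    rcases List.mem_append.mp hx with hx | hx
    · exact Or.inr ((List.pairwise_append.mp hpw).2.2 x hx B (by simp))
    · simp at hx; exact Or.inl hx
  rcases h1 with rfl | ⟨u1, u2, u3⟩ <;> rcases h2 with rfl | ⟨v1, v2, v3⟩ <;>
    simp_all <;> omega

lemma lp_finite (A B : ℤ × ℤ) : {l : List (ℤ × ℤ) | IsLatticePath A B l}.Finite := by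
  classical
  set S : Finset (ℤ × ℤ) := Finset.Icc A.1 B.1 ×ˢ Finset.Icc B.2 A.2 with hS
  set n : ℕ := (B.1 - B.2 - (A.1 - A.2) + 1).toNat with hn
  have hsub : {l : List (ℤ × ℤ) | IsLatticePath A B l} ⊆
      {l : List (ℤ × ℤ) | l.length ≤ n ∧ ∀ x ∈ l, x ∈ S} := by
    intro l hl
    have hmem : ∀ x ∈ l, x ∈ S := by
      intro x hx
      have := lp_mem_bounds hl hx
      simp [hS, Finset.mem_Icc]
      omega
    refine ⟨?_, hmem⟩
    -- length bound via the strictly increasing function p.1 - p.2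
    have hpw : (l.map fun p => p.1 - p.2).Pairwise (· < ·) :=
      List.pairwise_map.mpr ((lp_pairwise hl).imp fun hr => hr.2.2)
    have hnd : (l.map fun p => p.1 - p.2).Nodup := hpw.imp ne_of_lt
    have hsubI : (l.map fun p => p.1 - p.2).toFinset ⊆
        Finset.Icc (A.1 - A.2) (B.1 - B.2) := by
      intro y hy
      simp only [List.mem_toFinset, List.mem_map] at hy
      obtain ⟨x, hx, rfl⟩ := hy
      have := lp_mem_bounds hl hx
      simp [Finset.mem_Icc]; omega
    have := Finset.card_le_card hsubI
    rw [List.toFinset_card_of_nodup hnd, Int.card_Icc, List.length_map] at this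
    omega
  refine Set.Finite.subset ?_ hsub
  have hfin : {m : List ↥(S : Set (ℤ × ℤ)) | m.length ≤ n}.Finite :=
    List.finite_length_le _ n
  refine Set.Finite.subset (hfin.image (List.map Subtype.val)) ?_
  rintro l ⟨hlen, hmem⟩
  refine ⟨l.pmap (fun x hx => (⟨x, hx⟩ : ↥(S : Set (ℤ × ℤ)))) (by simpa using hmem), ?_, ?_⟩
  · simpa using hlen
  · simp [List.map_pmap]

lemma head?_append_cons {α : Type*} (a : List α) (p : α) (b c : List α) :
    (a ++ p :: b).head? = (a ++ p :: c).head? := by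
  cases a <;> simp

lemma lp_splice {A B C D : ℤ × ℤ} {a b c d : List (ℤ × ℤ)} {p : ℤ × ℤ}
    (h₁ : IsLatticePath A B (a ++ p :: b)) (h₂ : IsLatticePath C D (c ++ p :: d)) :
    IsLatticePath A D (a ++ p :: d) := by
  obtain ⟨-, hh₁, -, hc₁⟩ := h₁
  obtain ⟨-, -, hl₂, hc₂⟩ := h₂
  refine ⟨by simp, ?_, ?_, ?_⟩
  · rw [head?_append_cons a p d b]; exact hh₁
  · rw [List.getLast?_append_cons] at hl₂ ⊢
    exact hl₂
  · unfold List.Chain' at hc₁ hc₂ ⊢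
    rw [List.isChain_append] at hc₁ hc₂ ⊢
    exact ⟨hc₁.1, hc₂.2.1, by simpa using hc₁.2.2⟩

lemma takeWhile_spec {α : Type*} (P : α → Bool) (a : List α) (p : α) (b : List α)
    (h : ∀ x ∈ a, P x = true) (hp : P p = false) :
    (a ++ p :: b).takeWhile P = a ∧ (a ++ p :: b).dropWhile P = p :: b := by
  induction a with
  | nil => simp [List.takeWhile_cons, List.dropWhile_cons, hp]
  | cons x xs ih =>
    have hx : P x = true := h x (by simp)
    have := ih fun y hy => h y (by simp [hy])
    simp [List.takeWhile_cons, List.dropWhile_cons, hx, this.1, this.2]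

/-- Tail-swap at the first point of the first path lying on the second path. -/
def swapPair (P : List (ℤ × ℤ) × List (ℤ × ℤ)) : List (ℤ × ℤ) × List (ℤ × ℤ) :=
  match P.1.dropWhile (fun x => decide (x ∉ P.2)) with
  | [] => P
  | p :: b =>
      (P.1.takeWhile (fun x => decide (x ∉ P.2)) ++ P.2.dropWhile (fun y => decide (y ≠ p)),
        P.2.takeWhile (fun y => decide (y ≠ p)) ++ p :: b)

lemma swapPair_eq {l₁ l₂ a b c d : List (ℤ × ℤ)} {p : ℤ × ℤ}
    (h₁ : l₁ = a ++ p :: b) (h₂ : l₂ = c ++ p :: d)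
    (ha : ∀ x ∈ a, x ∉ l₂) (hc : p ∉ c) :
    swapPair (l₁, l₂) = (a ++ p :: d, c ++ p :: b) := by
  have hp2 : p ∈ l₂ := by rw [h₂]; simp
  subst h₁; subst h₂
  have hs1 := takeWhile_spec (fun x => decide (x ∉ c ++ p :: d)) a p b
    (fun x hx => by simp [ha x hx]) (by simpa using hp2)
  have hs2 := takeWhile_spec (fun y => decide (y ≠ p)) c p d
    (fun y hy => by
      simp only [decide_eq_true_eq]
      intro e; exact hc (e ▸ hy)) (by simp)
  unfold swapPair
  simp only [hs1.1, hs1.2, hs2.1, hs2.2]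

lemma exists_first {l₁ l₂ : List (ℤ × ℤ)} (h : ∃ x, x ∈ l₁ ∧ x ∈ l₂) :
    ∃ a p b, l₁ = a ++ p :: b ∧ p ∈ l₂ ∧ ∀ x ∈ a, x ∉ l₂ := by
  induction l₁ with
  | nil => obtain ⟨x, hx, -⟩ := h; simp at hx
  | cons y t ih =>
    by_cases hy : y ∈ l₂
    · exact ⟨[], y, t, rfl, hy, by simp⟩
    · obtain ⟨x, hx, hx2⟩ := h
      have hxt : x ∈ t := by
        rcases List.mem_cons.mp hx with h' | h'
        · subst h'; exact absurd hx2 hy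
        · exact h' 
      obtain ⟨a, p, b, he, hp, hap⟩ := ih ⟨x, hxt, hx2⟩
      exact ⟨y :: a, p, b, by simp [he], hp, by
        intro z hz
        rcases List.mem_cons.mp hz with rfl | hz
        · exact hy
        · exact hap z hz⟩

lemma exists_split {p : ℤ × ℤ} {l : List (ℤ × ℤ)} (h : p ∈ l) :
    ∃ c d, l = c ++ p :: d ∧ p ∉ c := by
  induction l with
  | nil => simp at h
  | cons y t ih =>
    by_cases hy : p = y
    · exact ⟨[], t, by simp [hy], by simp⟩
    · have ht : p ∈ t := by
        rcases List.mem_cons.mp h with h' | h'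
        · exact absurd h' hy
        · exact h' 
      obtain ⟨c, d, he, hc⟩ := ih ht
      exact ⟨y :: c, d, by simp [he], by
        intro hz
        rcases List.mem_cons.mp hz with rfl | hz
        · exact hy rfl
        · exact hc hz⟩

lemma swap_swap {A B C D : ℤ × ℤ} {l₁ l₂ : List (ℤ × ℤ)}
    (h₁ : IsLatticePath A B l₁) (h₂ : IsLatticePath C D l₂)
    (hint : ∃ p, p ∈ l₁ ∧ p ∈ l₂) :
    IsLatticePath A D (swapPair (l₁, l₂)).1 ∧ IsLatticePath C B (swapPair (l₁, l₂)).2 ∧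
      (∃ p, p ∈ (swapPair (l₁, l₂)).1 ∧ p ∈ (swapPair (l₁, l₂)).2) ∧
      swapPair (swapPair (l₁, l₂)) = (l₁, l₂) := by
  obtain ⟨a, p, b, he₁, hp₂, ha⟩ := exists_first hint
  obtain ⟨c, d, he₂, hc⟩ := exists_split hp₂
  have hswap : swapPair (l₁, l₂) = (a ++ p :: d, c ++ p :: b) :=
    swapPair_eq he₁ he₂ ha hc
  rw [he₁] at h₁; rw [he₂] at h₂
  have hnd₁ := lp_nodup h₁
  have hab : ∀ x ∈ a, x ∉ p :: b := by
    intro x hx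
    exact fun hxb => (List.disjoint_of_nodup_append hnd₁) hx hxb
  have ha' : ∀ x ∈ a, x ∉ c ++ p :: b := by
    intro x hx hmem
    rcases List.mem_append.mp hmem with hm | hm
    · exact ha x hx (he₂ ▸ List.mem_append.mpr (Or.inl hm))
    · exact hab x hx hm
  have hswap2 : swapPair (a ++ p :: d, c ++ p :: b) = (a ++ p :: b, c ++ p :: d) :=
    swapPair_eq rfl rfl ha' hc
  rw [hswap]
  exact ⟨lp_splice h₁ h₂, lp_splice h₂ h₁, ⟨p, by simp, by simp⟩,
    by rw [hswap2, ← he₁, ← he₂]⟩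

lemma ncard_prod {α β : Type*} (s : Set α) (t : Set β) :
    (s ×ˢ t).ncard = s.ncard * t.ncard := by
  rw [← Nat.card_coe_set_eq, ← Nat.card_coe_set_eq, ← Nat.card_coe_set_eq,
    ← Nat.card_prod]
  exact Nat.card_congr (Equiv.Set.prod s t)

end LGVAux

open LGVAux in
/-- The 2-path case of the Lindström–Gessel–Viennot lemma: if every lattice path
from A₁ to B₂ meets every lattice path from A₂ to B₁, then the number of pairs of
nonintersecting lattice paths (A₁ → B₁, A₂ → B₂) equals
P(A₁→B₁)·P(A₂→B₂) − P(A₁→B₂)·P(A₂→B₁). -/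
theorem lgv_two_paths (A₁ A₂ B₁ B₂ : ℤ × ℤ)
    (hcross : ∀ π₁ π₂ : List (ℤ × ℤ), IsLatticePath A₁ B₂ π₁ → IsLatticePath A₂ B₁ π₂ →
      ∃ p : ℤ × ℤ, p ∈ π₁ ∧ p ∈ π₂) :
    (Set.ncard {P : List (ℤ × ℤ) × List (ℤ × ℤ) |
        IsLatticePath A₁ B₁ P.1 ∧ IsLatticePath A₂ B₂ P.2 ∧
          ¬∃ p : ℤ × ℤ, p ∈ P.1 ∧ p ∈ P.2} : ℤ) =
      (pathCount A₁ B₁ : ℤ) * pathCount A₂ B₂ -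
        (pathCount A₁ B₂ : ℤ) * pathCount A₂ B₁ := by
  classical
  set S₁₁ := {l : List (ℤ × ℤ) | IsLatticePath A₁ B₁ l}
  set S₂₂ := {l : List (ℤ × ℤ) | IsLatticePath A₂ B₂ l}
  set S₁₂ := {l : List (ℤ × ℤ) | IsLatticePath A₁ B₂ l}
  set S₂₁ := {l : List (ℤ × ℤ) | IsLatticePath A₂ B₁ l}
  set Snon := {P : List (ℤ × ℤ) × List (ℤ × ℤ) |
      IsLatticePath A₁ B₁ P.1 ∧ IsLatticePath A₂ B₂ P.2 ∧
        ¬∃ p : ℤ × ℤ, p ∈ P.1 ∧ p ∈ P.2} with hSnon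
  set Sint := {P : List (ℤ × ℤ) × List (ℤ × ℤ) |
      IsLatticePath A₁ B₁ P.1 ∧ IsLatticePath A₂ B₂ P.2 ∧
        ∃ p : ℤ × ℤ, p ∈ P.1 ∧ p ∈ P.2} with hSint
  have hfin11 := lp_finite A₁ B₁
  have hfin22 := lp_finite A₂ B₂
  have hfin12 := lp_finite A₁ B₂
  have hfin21 := lp_finite A₂ B₁
  have hall : S₁₁ ×ˢ S₂₂ = Snon ∪ Sint := by
    ext P
    simp only [Set.mem_prod, Set.mem_union, hSnon, hSint, Set.mem_setOf_eq]
    tauto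
  have hfinall : (S₁₁ ×ˢ S₂₂).Finite := hfin11.prod hfin22
  have hfinnon : Snon.Finite := hfinall.subset (by rw [hall]; exact Set.subset_union_left)
  have hfinint : Sint.Finite := hfinall.subset (by rw [hall]; exact Set.subset_union_right)
  have hdisj : Disjoint Snon Sint := by
    rw [Set.disjoint_left]
    rintro P ⟨-, -, hn⟩ ⟨-, -, hi⟩
    exact hn hi
  -- the bijection between Sint and S₁₂ ×ˢ S₂₁
  have hmapsTo : Set.MapsTo swapPair Sint (S₁₂ ×ˢ S₂₁) := by
    rintro ⟨l₁, l₂⟩ ⟨h1, h2, hint⟩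
    obtain ⟨p1, p2, -, -⟩ := swap_swap h1 h2 hint
    exact ⟨p1, p2⟩
  have hmapsTo' : Set.MapsTo swapPair (S₁₂ ×ˢ S₂₁) Sint := by
    rintro ⟨l₁, l₂⟩ ⟨h1, h2⟩
    obtain ⟨p1, p2, hint', -⟩ := swap_swap h1 h2 (hcross l₁ l₂ h1 h2)
    exact ⟨p1, p2, hint'⟩
  have hinv : Set.InvOn swapPair swapPair Sint (S₁₂ ×ˢ S₂₁) := by
    constructor
    · rintro ⟨l₁, l₂⟩ ⟨h1, h2, hint⟩
      exact (swap_swap h1 h2 hint).2.2.2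
    · rintro ⟨l₁, l₂⟩ ⟨h1, h2⟩
      exact (swap_swap h1 h2 (hcross l₁ l₂ h1 h2)).2.2.2
  have hbij : Set.BijOn swapPair Sint (S₁₂ ×ˢ S₂₁) :=
    hinv.bijOn hmapsTo hmapsTo'
  have hcard_int : Sint.ncard = (S₁₂ ×ˢ S₂₁).ncard := by
    rw [← hbij.image_eq, Set.ncard_image_of_injOn hbij.injOn]
  have hcard_all : Snon.ncard + Sint.ncard = S₁₁.ncard * S₂₂.ncard := by
    rw [← ncard_prod, hall, Set.ncard_union_eq hdisj hfinnon hfinint]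
  have hcard_int' : Sint.ncard = S₁₂.ncard * S₂₁.ncard := by
    rw [hcard_int, ncard_prod]
  have hpc11 : pathCount A₁ B₁ = S₁₁.ncard := rfl
  have hpc22 : pathCount A₂ B₂ = S₂₂.ncard := rfl
  have hpc12 : pathCount A₁ B₂ = S₁₂.ncard := rfl
  have hpc21 : pathCount A₂ B₁ = S₂₁.ncard := rfl
  rw [hpc11, hpc22, hpc12, hpc21]
  have h1 : (Snon.ncard : ℤ) + Sint.ncard = (S₁₁.ncard : ℤ) * S₂₂.ncard := by
    exact_mod_cast hcard_all
  have h2 : (Sint.ncard : ℤ) = (S₁₂.ncard : ℤ) * S₂₁.ncard := by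
    exact_mod_cast hcard_int'
  -- conclude by linear arithmetic
  linarith
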